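/- There exists a prefix-closed set 𝓔 of histories and a history H ∈ 𝓔 such that H is last-use opaque with respect to 𝓔 but H does not avoid cascading aborts (H is not ACA). -/

import Mathlib

/-!
Formal model of transactional memory (TM) histories, following Siek &
Wojciechowski, "Last-use Opacity: A Strong Safety Property for Transactional
Memory with Early Release Support".

Transactions and shared variables are indexed by natural numbers; values of
variables are natural numbers with initial value 0.
-/

namespace TM

open Classical

/-- Transactional operations: `init`, read of a variable, write of a value to
a variable, `tryCommit` and `tryAbort`. -/
inductive Op : Type
  | init : Op
  | read : ℕ → Op
  | write : ℕ → ℕ → Op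
  | tryCommit : Op
  | tryAbort : Op
  deriving DecidableEq

/-- Responses: `ok`, a value (for reads), commit `C_i`, abort `A_i`. -/
inductive Resp : Type
  | ok : Resp
  | value : ℕ → Resp
  | committed : Resp
  | aborted : Resp
  deriving DecidableEq

/-- Invocation and response events, tagged with the transaction executing them. -/
inductive Event : Type
  | inv : ℕ → Op → Event
  | res : ℕ → Resp → Event
  deriving DecidableEq

/-- The transaction executing an event. -/
def Event.txn : Event → ℕ
  | .inv t _ => t
  | .res t _ => t

/-- A history is a finite sequence of events. -/
abbrev History := List Event

/-- `proj i H` is `H|T_i`, the subsequence of events of transaction `i`. -/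
def proj (i : ℕ) (H : History) : History :=
  H.filter (fun e => e.txn == i)

/-- Transaction `i` is in `H` (`H|T_i ≠ ∅`). -/
def inTxn (H : History) (i : ℕ) : Prop := proj i H ≠ []

/-- `T_i` is committed in `H`: `H|T_i` contains `tryC_i → C_i`. -/
def committed (H : History) (i : ℕ) : Prop :=
  List.Sublist [Event.inv i Op.tryCommit, Event.res i Resp.committed] (proj i H)

/-- `T_i` is aborted in `H`: `H|T_i` contains a response `A_i`. -/
def aborted (H : History) (i : ℕ) : Prop :=
  Event.res i Resp.aborted ∈ proj i H

/-- `T_i` is commit-pending in `H`. -/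
def commitPending (H : History) (i : ℕ) : Prop :=
  Event.inv i Op.tryCommit ∈ proj i H ∧
    Event.res i Resp.committed ∉ proj i H ∧ Event.res i Resp.aborted ∉ proj i H

/-- `T_i` is live in `H`. -/
def live (H : History) (i : ℕ) : Prop :=
  inTxn H i ∧ ¬ committed H i ∧ ¬ aborted H i ∧ ¬ commitPending H i

/-- A complete operation execution by transaction `i` in `H`: the invocation
is at position `ki`, its matching response at position `kr` (no events of `i`
in between). -/
def opExec (H : History) (i ki kr : ℕ) (o : Op) (r : Resp) : Prop :=
  ki < kr ∧ H[ki]? = some (Event.inv i o) ∧ H[kr]? = some (Event.res i r) ∧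
    ∀ (m : ℕ) (e : Event), ki < m → m < kr → H[m]? = some e → e.txn ≠ i

def isInvEvent : Event → Prop
  | .inv _ _ => True
  | .res _ _ => False

def isResEvent : Event → Prop
  | .inv _ _ => False
  | .res _ _ => True

/-- Well-formedness of `H|T_i` (as the list `L`): alternation of invocations
and responses starting with `init_i`, no events after a commit/abort response,
and no invocation after an invocation of `tryC_i` or `tryA_i`. -/
def wellFormedTxn (L : History) (i : ℕ) : Prop :=
  (∀ (k : ℕ) (e : Event), L[k]? = some e →
      ((k % 2 = 0 → isInvEvent e) ∧ (k % 2 = 1 → isResEvent e))) ∧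
  (L ≠ [] → L[0]? = some (Event.inv i Op.init)) ∧
  (∀ k : ℕ, (L[k]? = some (Event.res i Resp.committed) ∨
      L[k]? = some (Event.res i Resp.aborted)) → L.length = k + 1) ∧
  (∀ (k : ℕ) (o : Op), L[k]? = some (Event.inv i o) → (o = Op.tryCommit ∨ o = Op.tryAbort) →
      ∀ (m : ℕ) (o' : Op), L[m]? = some (Event.inv i o') → m ≤ k)

/-- A well-formed history. -/
def wellFormed (H : History) : Prop :=
  ∀ i : ℕ, wellFormedTxn (proj i H) i

/-- Unique writes: distinct write executions write distinct values, all
different from the initial value 0. -/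
def uniqueWrites (H : History) : Prop :=
  ∀ (k1 k2 i1 i2 x1 x2 v1 v2 : ℕ),
    H[k1]? = some (Event.inv i1 (Op.write x1 v1)) →
    H[k2]? = some (Event.inv i2 (Op.write x2 v2)) →
    v1 ≠ 0 ∧ (k1 ≠ k2 → v1 ≠ v2)

/-- Two histories are equivalent if they agree on every `H|T_i`. -/
def equivH (H1 H2 : History) : Prop := ∀ i : ℕ, proj i H1 = proj i H2

/-- Real-time precedence: the last event of `H|T_i` precedes the first event
of `H|T_j` in `H`. -/
def rtPrec (H : History) (i j : ℕ) : Prop :=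
  ∃ k l : ℕ, k < l ∧
    (∃ e : Event, H[k]? = some e ∧ e.txn = i) ∧
    (∃ e : Event, H[l]? = some e ∧ e.txn = j) ∧
    (∀ (m : ℕ) (e : Event), H[m]? = some e → e.txn = i → m ≤ k) ∧
    (∀ (m : ℕ) (e : Event), H[m]? = some e → e.txn = j → l ≤ m)

/-- `S` preserves the real-time order of `H`. -/
def preservesRT (H S : History) : Prop := ∀ i j : ℕ, rtPrec H i j → rtPrec S i j

/-- A sequential history: any two distinct transactions are comparable in the
real-time order. -/
def sequential (S : History) : Prop :=
  ∀ i j : ℕ, inTxn S i → inTxn S j → i ≠ j → rtPrec S i j ∨ rtPrec S j i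

/-- The read of value `v` on variable `x` invoked at position `ki` is
consistent with the sequential specification of `x`: the latest write to `x`
completed before it writes `v`, or there is no such write and `v = 0`. -/
def readsLegally (S : History) (x v ki : ℕ) : Prop :=
  (∃ j kwi kwr : ℕ, kwr < ki ∧ opExec S j kwi kwr (Op.write x v) Resp.ok ∧
      ∀ j' v' kwi' kwr' : ℕ,
        opExec S j' kwi' kwr' (Op.write x v') Resp.ok → kwr' < ki → kwr' ≤ kwr)
  ∨ (v = 0 ∧ ∀ j v' kwi kwr : ℕ, opExec S j kwi kwr (Op.write x v') Resp.ok → ¬ kwr < ki)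

/-- A (sequential) history is legal if its restriction to every variable is in
the variable's sequential specification, i.e. every complete read is
consistent with the latest preceding write. -/
def isLegal (S : History) : Prop :=
  ∀ i x v ki kr : ℕ, opExec S i ki kr (Op.read x) (Resp.value v) → readsLegally S x v ki

/-- Transaction `i` has the pending (unanswered) invocation of `o` in `H`. -/
def pendingInv (H : History) (i : ℕ) (o : Op) : Prop :=
  (proj i H).getLast? = some (Event.inv i o)

/-- `C` is a completion `Compl(H)` of `H`. -/
def isCompletion (H C : History) : Prop :=
  H <+: C ∧
  (∀ i : ℕ, inTxn C i → inTxn H i) ∧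
  (∀ i : ℕ, inTxn C i → committed C i ∨ aborted C i) ∧
  ∀ i : ℕ, inTxn H i →
    ((committed H i ∨ aborted H i) → proj i C = proj i H) ∧
    (¬ committed H i → ¬ aborted H i →
      (pendingInv H i Op.tryCommit →
          proj i C = proj i H ++ [Event.res i Resp.committed]) ∧
      ((∃ o : Op, o ≠ Op.tryCommit ∧ pendingInv H i o) →
          proj i C = proj i H ++ [Event.res i Resp.aborted]) ∧
      ((¬ ∃ o : Op, pendingInv H i o) →
          proj i C = proj i H ++ [Event.inv i Op.tryCommit, Event.res i Resp.aborted]))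

/-- Restriction of a history to the events of a set of transactions. -/
noncomputable def restrictTxns (S : History) (T : Set ℕ) : History :=
  S.filter (fun e => decide (e.txn ∈ T))

/-- `Vis(S,T_i)`: the longest subhistory of `S` containing, for each `T_j` in
`S`, the events of `T_j` iff `j = i` or (`T_j` is committed and `T_j ≺_S T_i`). -/
noncomputable def Vis (S : History) (i : ℕ) : History :=
  restrictTxns S {j | j = i ∨ (committed S j ∧ rtPrec S j i)}

/-- `T_i` is legal in `S` if `Vis(S,T_i)` is legal. -/
def legalIn (S : History) (i : ℕ) : Prop := isLegal (Vis S i)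

/-- Serializability. -/
def serializable (H : History) : Prop :=
  ∃ C S : History, isCompletion H C ∧ sequential S ∧ equivH S C ∧
    ∀ i : ℕ, inTxn S i → committed S i → legalIn S i

/-- The read invoked at position `ki` by `T_j` on `x` is non-local: no write
to `x` by `T_j` precedes it. -/
def nonLocalReadAt (H : History) (j x ki : ℕ) : Prop :=
  ∀ m v : ℕ, m < ki → H[m]? ≠ some (Event.inv j (Op.write x v))

/-- `T_i` releases variable `x` early in `H`. -/
def releasesEarly (H : History) (i x : ℕ) : Prop :=
  ∃ P : History, P <+: H ∧ live P i ∧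
    ∃ j v wki wkr rki rkr : ℕ, j ≠ i ∧
      opExec P i wki wkr (Op.write x v) Resp.ok ∧
      opExec P j rki rkr (Op.read x) (Resp.value v) ∧
      nonLocalReadAt P j x rki ∧
      wkr < rki

/-- Overwriting by `T_i` observed by `T_j` on variable `x` in `H`. -/
def overwriting (H : History) (i j x : ℕ) : Prop :=
  i ≠ j ∧ releasesEarly H i x ∧
  ∃ v v' k1i k1r k2i k2r kri krr : ℕ,
    opExec H i k1i k1r (Op.write x v) Resp.ok ∧
    opExec H i k2i k2r (Op.write x v') Resp.ok ∧ k1r < k2i ∧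
    opExec H j kri krr (Op.read x) (Resp.value v) ∧ krr < k2i

/-- Final-state opacity. -/
def finalStateOpaque (H : History) : Prop :=
  ∃ C S : History, isCompletion H C ∧ sequential S ∧ equivH S C ∧ preservesRT H S ∧
    ∀ i : ℕ, inTxn S i → legalIn S i

/-- Opacity: every finite prefix is final-state opaque. -/
def isOpaque (H : History) : Prop := ∀ P : History, P <+: H → finalStateOpaque P

/-- Causal past of `T_i` in `H`: `T_i` together with the committed or aborted
transactions that precede `T_i` in `H`. -/
def causalPast (H : History) (i : ℕ) : Set ℕ :=
  {j | j = i ∨ ((committed H j ∨ aborted H j) ∧ rtPrec H j i)}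

/-- Virtual world consistency. -/
def VWC (H : History) : Prop :=
  (∃ S : History, sequential S ∧ equivH S (restrictTxns H {j | committed H j}) ∧
      preservesRT H S ∧ ∀ j : ℕ, inTxn S j → committed S j → legalIn S j) ∧
  (∀ i : ℕ, inTxn H i → aborted H i →
      ∃ S : History, sequential S ∧ equivH S (restrictTxns H (causalPast H i)) ∧ isLegal S)

/-! ### Live opacity -/

/-- Index `k` of `L` carries (part of) a read operation execution. -/
def isReadIdx (L : History) (k : ℕ) : Prop :=
  (∃ t x : ℕ, L[k]? = some (Event.inv t (Op.read x))) ∨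
  (1 ≤ k ∧ (∃ t x : ℕ, L[k-1]? = some (Event.inv t (Op.read x))) ∧
    ∃ (t : ℕ) (r : Resp), L[k]? = some (Event.res t r))

/-- Index `k` of `L` carries (part of) a non-local read operation execution. -/
def isNonLocalReadIdx (L : History) (k : ℕ) : Prop :=
  (∃ t x : ℕ, L[k]? = some (Event.inv t (Op.read x)) ∧
      ∀ m t' v : ℕ, m < k → L[m]? ≠ some (Event.inv t' (Op.write x v))) ∨
  (1 ≤ k ∧ (∃ (t : ℕ) (r : Resp), L[k]? = some (Event.res t r)) ∧
    ∃ t x : ℕ, L[k-1]? = some (Event.inv t (Op.read x)) ∧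
      ∀ m t' v : ℕ, m < k - 1 → L[m]? ≠ some (Event.inv t' (Op.write x v)))

/-- The subsequence of `L` of events at indices satisfying `p`. -/
noncomputable def seqOfIdx (L : History) (p : ℕ → Prop) : History :=
  ((List.range L.length).filter (fun k => decide (p k))).filterMap (fun k => L[k]?)

/-- `H|(T_i,r)`: the read operation executions of `T_i`, excluding the last
read if its response is `A_i`. -/
noncomputable def readSeq (H : History) (i : ℕ) : History :=
  let L := proj i H
  let R := seqOfIdx L (isReadIdx L)
  if R.getLast? = some (Event.res i Resp.aborted) then R.dropLast.dropLast else R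

/-- `H|(T_i,gr)`: the non-local read operation executions of `T_i`, excluding
the last read if its response is `A_i`. -/
noncomputable def grSeq (H : History) (i : ℕ) : History :=
  let L := proj i H
  let R := seqOfIdx L (isNonLocalReadIdx L)
  if R.getLast? = some (Event.res i Resp.aborted) then R.dropLast.dropLast else R

/-- The transaction `T_i^gr`. -/
noncomputable def grTxn (H : History) (i : ℕ) : History :=
  if grSeq H i = [] then []
  else [Event.inv i Op.init, Event.res i Resp.ok] ++ grSeq H i ++
       [Event.inv i Op.tryCommit, Event.res i Resp.committed]

/-- `S` justifies the serializability of `H`. -/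
def justifiesSer (S H : History) : Prop :=
  ∃ H' : History, List.Sublist H' H ∧ (∀ e ∈ H', committed H e.txn) ∧
    (∀ j : ℕ, committed H j → proj j H' = proj j H) ∧
    isLegal S ∧ equivH S H'

/-- All complete local reads of `T_i` in `H` have legal responses: the last
preceding write of `T_i` to the variable wrote the value read. -/
def localReadsLegal (H : History) (i : ℕ) : Prop :=
  ∀ x v ki kr : ℕ, opExec (proj i H) i ki kr (Op.read x) (Resp.value v) →
    (∃ m w : ℕ, m < ki ∧ (proj i H)[m]? = some (Event.inv i (Op.write x w))) →
    ∃ m : ℕ, m < ki ∧ (proj i H)[m]? = some (Event.inv i (Op.write x v)) ∧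
      ∀ m' w' : ℕ, m < m' → m' < ki → (proj i H)[m']? ≠ some (Event.inv i (Op.write x w'))

/-- Live opacity. -/
def liveOpaque (H : History) : Prop :=
  ∃ S : History, sequential S ∧ preservesRT H S ∧ justifiesSer S H ∧
    (∃ S' : History, sequential S' ∧ List.Sublist S S' ∧
      (∀ i : ℕ, inTxn H i → ¬ inTxn S i → proj i S' = grTxn H i) ∧
      (∀ i j : ℕ, rtPrec H i j → inTxn S' i → inTxn S' j → rtPrec S' i j) ∧
      isLegal S') ∧
    (∀ i : ℕ, inTxn H i → ¬ inTxn S i → localReadsLegal H i)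

/-! ### Last-use opacity -/

/-- A prefix-closed set of histories (the possible histories of a program). -/
def prefixClosed (E : Set History) : Prop :=
  ∀ H ∈ E, ∀ P : History, P <+: H → P ∈ E

/-- The write execution on `x` by `T_i` at positions `(ki,kr)` is the closing
("last") write on `x` by `T_i` in `H` with respect to the possible histories
`E`: in no extension of `H` in `E` does `T_i` invoke another write on `x`
after it. -/
def closingWrite (E : Set History) (H : History) (i x v ki kr : ℕ) : Prop :=
  opExec H i ki kr (Op.write x v) Resp.ok ∧
  ∀ H' ∈ E, H <+: H' → ∀ m v' : ℕ, H'[m]? = some (Event.inv i (Op.write x v')) → m ≤ ki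

/-- `T_i` decided on `x` in `H` (w.r.t. `E`). -/
def decidedOn (E : Set History) (H : History) (i x : ℕ) : Prop :=
  ∃ v ki kr : ℕ, closingWrite E H i x v ki kr

/-- The variable accessed by an operation. -/
def opVar : Op → Option ℕ
  | .read x => some x
  | .write x _ => some x
  | _ => none

/-- The variable accessed by the event at index `k` of `L` (for a response,
the variable of the matching invocation at `k-1`). -/
def eventVarAt (L : History) (k : ℕ) : Option ℕ :=
  match L[k]? with
  | some (Event.inv _ o) => opVar o
  | some (Event.res _ _) =>
      match L[k-1]? with
      | some (Event.inv _ o) => opVar o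
      | _ => none
  | none => none

/-- The operation execution starting at index `k` of `L` is complete. -/
def completeAt (L : History) (k : ℕ) : Prop :=
  ∀ (t : ℕ) (o : Op), L[k]? = some (Event.inv t o) →
    ∃ (t' : ℕ) (r : Resp), L[k+1]? = some (Event.res t' r)

/-- `Hs⌊T_i` (decided transaction subhistory): the subsequence of `Hs|T_i`
consisting of `init_i` and all complete operation executions on variables on
which `T_i` decided (decidedness judged in `Hd` w.r.t. `E`). -/
noncomputable def lastUseProj (E : Set History) (Hd Hs : History) (i : ℕ) : History :=
  let L := proj i Hs
  seqOfIdx L (fun k => completeAt L k ∧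
    (k ≤ 1 ∨ ∃ x : ℕ, eventVarAt L k = some x ∧ decidedOn E Hd i x))

/-- `Hs⌊^T_i = Hs⌊T_i · [tryC_i → C_i]`. -/
noncomputable def lastUseProjC (E : Set History) (Hd Hs : History) (i : ℕ) : History :=
  lastUseProj E Hd Hs i ++ [Event.inv i Op.tryCommit, Event.res i Resp.committed]

/-- Transactions of a history in order of first occurrence. -/
def txnOrder : History → List ℕ
  | [] => []
  | e :: t => e.txn :: (txnOrder t).filter (fun j => j ≠ e.txn)

/-- The candidate `LUVis(S,T_i)` determined by a choice `inc` of which decided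
non-committed transactions to include: for each transaction `j` of `S` in
order, all of `S|T_j` if `j = i` or `T_j` is committed in `S` and `T_j ≺_S T_i`;
`S⌊^T_j` if `T_j` is non-committed, decided on some variable in `H`,
`T_j ≺_S T_i`, not `T_j ≺_H T_i`, and `inc j` holds; nothing otherwise. -/
noncomputable def buildLUVis (E : Set History) (H S : History) (i : ℕ)
    (inc : ℕ → Prop) : History :=
  (txnOrder S).flatMap (fun j =>
    if j = i ∨ (committed S j ∧ rtPrec S j i) then proj j S
    else if ¬ committed S j ∧ (∃ x : ℕ, decidedOn E H j x) ∧ rtPrec S j i ∧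
        ¬ rtPrec H j i ∧ inc j
      then lastUseProjC E H S j
    else [])

/-- `T_i` is last-use legal in `S`: some admissible `LUVis(S,T_i)` is legal. -/
def lastUseLegal (E : Set History) (H S : History) (i : ℕ) : Prop :=
  ∃ inc : ℕ → Prop, isLegal (buildLUVis E H S i inc)

/-- Final-state last-use opacity with respect to `E`. -/
def finalStateLUOpaque (E : Set History) (H : History) : Prop :=
  ∃ C S : History, isCompletion H C ∧ sequential S ∧ equivH S C ∧ preservesRT H S ∧
    (∀ i : ℕ, inTxn S i → committed S i → legalIn S i) ∧
    (∀ i : ℕ, inTxn S i → ¬ committed S i → lastUseLegal E H S i)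

/-- Last-use opacity with respect to `E`: every finite prefix is final-state
last-use opaque with respect to `E`. -/
def lastUseOpaque (E : Set History) (H : History) : Prop :=
  ∀ P : History, P <+: H → finalStateLUOpaque E P

/-! ### Database conditions -/

/-- `T_j` reads from `T_i` in `H` (unique writes). -/
def readsFrom (H : History) (j i : ℕ) : Prop :=
  ∃ x v kwi kwr kri krr : ℕ,
    opExec H i kwi kwr (Op.write x v) Resp.ok ∧
    opExec H j kri krr (Op.read x) (Resp.value v)

/-- Recoverability: if `T_j` reads from `T_i` then `T_i` commits before `T_j`
commits. -/
def recoverable (H : History) : Prop :=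
  ∀ i j : ℕ, i ≠ j → readsFrom H j i →
    ∀ kc' : ℕ, H[kc']? = some (Event.res j Resp.committed) →
      ∃ kc : ℕ, kc < kc' ∧ H[kc]? = some (Event.res i Resp.committed)

/-- Avoiding cascading aborts: whenever `T_j` reads `x` from `T_i`, the commit
response `C_i` precedes the read. -/
def ACA (H : History) : Prop :=
  ∀ i j x v kwi kwr kri krr : ℕ, i ≠ j →
    opExec H i kwi kwr (Op.write x v) Resp.ok →
    opExec H j kri krr (Op.read x) (Resp.value v) →
    ∃ m : ℕ, m < kri ∧ H[m]? = some (Event.res i Resp.committed)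

/-- Strictness. -/
def strictH (H : History) : Prop :=
  ∀ i j : ℕ, i ≠ j → ∀ x v v' ki kr kwi kwr : ℕ,
    (opExec H i ki kr (Op.read x) (Resp.value v) ∨ opExec H i ki kr (Op.write x v') Resp.ok) →
    opExec H j kwi kwr (Op.write x v) Resp.ok →
    kwr < ki →
    ∃ m : ℕ, m < ki ∧
      (H[m]? = some (Event.res j Resp.committed) ∨ H[m]? = some (Event.res j Resp.aborted))

end TM

namespace TM

open Classical

/-! ### Generic helper lemmas -/

lemma lt_len {L : History} {k : ℕ} {e : Event} (h : L[k]? = some e) : k < L.length :=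
  (List.getElem?_eq_some_iff.mp h).1

lemma mem_proj {L : History} {i : ℕ} {e : Event} (h : e ∈ proj i L) :
    e ∈ L ∧ e.txn = i := by
  unfold proj at h
  have h1 := List.mem_of_mem_filter h
  have h2 := List.of_mem_filter h
  exact ⟨h1, by simpa using h2⟩

lemma inTxn_txn {L : History} {i : ℕ} (h : inTxn L i) : ∃ e ∈ L, e.txn = i := by
  obtain ⟨e, he⟩ := List.exists_mem_of_ne_nil _ h
  obtain ⟨h1, h2⟩ := mem_proj he
  exact ⟨e, h1, h2⟩

lemma proj_eq_nil {L : History} {i : ℕ} (hL : ∀ e ∈ L, e.txn = 1 ∨ e.txn = 2)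
    (h1 : i ≠ 1) (h2 : i ≠ 2) : proj i L = [] := by
  apply List.filter_eq_nil_iff.mpr
  intro e he
  rcases hL e he with h | h <;> simp [h, Ne.symm h1, Ne.symm h2]

lemma not_committed {S : History} {i : ℕ}
    (h : Event.res i Resp.committed ∉ proj i S) : ¬ committed S i := by
  intro hc
  exact h (hc.subset (by simp))

lemma rtPrec_irrefl {P : History} {i : ℕ} : ¬ rtPrec P i i := by
  rintro ⟨k, l, hkl, ⟨e1, he1, ht1⟩, ⟨e2, he2, ht2⟩, h1, h2⟩
  have := h1 l e2 he2 ht2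
  omega

lemma rtPrec_txn_left {P : History} {i j : ℕ} (h : rtPrec P i j) :
    ∃ e ∈ P, e.txn = i := by
  obtain ⟨k, l, _, ⟨e1, he1, ht1⟩, _, _, _⟩ := h
  exact ⟨e1, List.mem_of_getElem? he1, ht1⟩

lemma rtPrec_txn_right {P : History} {i j : ℕ} (h : rtPrec P i j) :
    ∃ e ∈ P, e.txn = j := by
  obtain ⟨k, l, _, _, ⟨e2, he2, ht2⟩, _, _⟩ := h
  exact ⟨e2, List.mem_of_getElem? he2, ht2⟩

lemma not_rtPrec_of {P : History} {i j a b : ℕ} {ea eb : Event}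
    (ha : P[a]? = some ea) (hta : ea.txn = i)
    (hb : P[b]? = some eb) (htb : eb.txn = j) (hba : b ≤ a) : ¬ rtPrec P i j := by
  rintro ⟨k, l, hkl, _, _, h1, h2⟩
  have hka := h1 a ea ha hta
  have hlb := h2 b eb hb htb
  omega

lemma rtPrec_append {A B : History} (hA : A ≠ []) (hA1 : ∀ e ∈ A, e.txn = 1)
    (hB : B ≠ []) (hB2 : ∀ e ∈ B, e.txn = 2) : rtPrec (A ++ B) 1 2 := by
  have hAl : 0 < A.length := List.length_pos_iff.mpr hA
  have hBl : 0 < B.length := List.length_pos_iff.mpr hB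
  refine ⟨A.length - 1, A.length, by omega, ?_, ?_, ?_, ?_⟩
  · refine ⟨A.getLast hA, ?_, hA1 _ (List.getLast_mem hA)⟩
    rw [List.getElem?_append_left (by omega), List.getElem?_eq_some_iff]
    exact ⟨by omega, (A.getLast_eq_getElem hA).symm⟩
  · refine ⟨B.head hB, ?_, hB2 _ (List.head_mem hB)⟩
    rw [List.getElem?_append_right (le_refl _), List.getElem?_eq_some_iff]
    refine ⟨by omega, by simp [List.head_eq_getElem]⟩
  · intro m e hm ht
    by_contra hc
    push_neg at hc
    have hmA : A.length ≤ m := by omega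
    rw [List.getElem?_append_right hmA] at hm
    have := hB2 e (List.mem_of_getElem? hm)
    omega
  · intro m e hm ht
    by_contra hc
    push_neg at hc
    rw [List.getElem?_append_left (by omega)] at hm
    have := hA1 e (List.mem_of_getElem? hm)
    omega

lemma sequential_append {A B : History} (hA1 : ∀ e ∈ A, e.txn = 1)
    (hB2 : ∀ e ∈ B, e.txn = 2) : sequential (A ++ B) := by
  intro i j hi hj hij
  obtain ⟨ei, hei, hti⟩ := inTxn_txn hi
  obtain ⟨ej, hej, htj⟩ := inTxn_txn hj
  have hmem : ∀ e ∈ A ++ B, e.txn = 1 ∨ e.txn = 2 := by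
    intro e he
    rcases List.mem_append.mp he with h | h
    · exact Or.inl (hA1 e h)
    · exact Or.inr (hB2 e h)
  have hne : ∀ {e : Event}, e ∈ A ++ B → e.txn = 1 → e ∈ A := by
    intro e he ht
    rcases List.mem_append.mp he with h | h
    · exact h
    · have := hB2 e h; omega
  have hne2 : ∀ {e : Event}, e ∈ A ++ B → e.txn = 2 → e ∈ B := by
    intro e he ht
    rcases List.mem_append.mp he with h | h
    · have := hA1 e h; omega
    · exact h
  rcases hmem ei hei with h1 | h1 <;> rcases hmem ej hej with h2 | h2
  · exact absurd (by omega : i = j) hij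
  · subst hti; subst htj
    rw [h1, h2]
    exact Or.inl (rtPrec_append (List.ne_nil_of_mem (hne hei h1)) hA1
      (List.ne_nil_of_mem (hne2 hej h2)) hB2)
  · subst hti; subst htj
    rw [h1, h2]
    exact Or.inr (rtPrec_append (List.ne_nil_of_mem (hne hej h2)) hA1
      (List.ne_nil_of_mem (hne2 hei h1)) hB2)
  · exact absurd (by omega : i = j) hij

lemma preservesRT_of {P S : History} (hP : ∀ e ∈ P, e.txn = 1 ∨ e.txn = 2)
    (h12 : rtPrec P 1 2 → rtPrec S 1 2) (h21 : rtPrec P 2 1 → rtPrec S 2 1) :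
    preservesRT P S := by
  intro i j h
  obtain ⟨ei, hei, hti⟩ := rtPrec_txn_left h
  obtain ⟨ej, hej, htj⟩ := rtPrec_txn_right h
  have hij : i ≠ j := by rintro rfl; exact rtPrec_irrefl h
  rcases hP ei hei with h1 | h1 <;> rcases hP ej hej with h2 | h2
  · exact absurd (by omega : i = j) hij
  · subst hti; subst htj; rw [h1, h2] at h ⊢; exact h12 h
  · subst hti; subst htj; rw [h1, h2] at h ⊢; exact h21 h
  · exact absurd (by omega : i = j) hij

lemma isLegal_of_noValue {L : History} (h : ∀ t v, Event.res t (Resp.value v) ∉ L) :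
    isLegal L := by
  rintro i x v ki kr ⟨_, _, hr, _⟩
  exact absurd (List.mem_of_getElem? hr) (h i v)

end TM

namespace TM

open Classical

lemma mem_seqOfIdx {L : History} {p : ℕ → Prop} {e : Event}
    (h : e ∈ seqOfIdx L p) : e ∈ L := by
  unfold seqOfIdx at h
  obtain ⟨k, _, hk⟩ := List.mem_filterMap.mp h
  exact List.mem_of_getElem? hk

lemma mem_buildLUVis {E : Set History} {H S : History} {i : ℕ} {inc : ℕ → Prop}
    {e : Event} (h : e ∈ buildLUVis E H S i inc) :
    e ∈ S ∨ (∃ j, e = Event.inv j Op.tryCommit) ∨ ∃ j, e = Event.res j Resp.committed := by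
  unfold buildLUVis at h
  obtain ⟨j, _, hj⟩ := List.mem_flatMap.mp h
  split at hj
  · exact Or.inl (mem_proj hj).1
  · split at hj
    · unfold lastUseProjC at hj
      rcases List.mem_append.mp hj with h' | h'
      · exact Or.inl (mem_proj (mem_seqOfIdx h')).1
      · simp only [List.mem_cons, List.not_mem_nil, or_false] at h'
        rcases h' with h' | h'
        · exact Or.inr (Or.inl ⟨j, h'⟩)
        · exact Or.inr (Or.inr ⟨j, h'⟩)
    · simp at hj

lemma lastUseLegal_of_noValue {E : Set History} {H S : History} {i : ℕ}
    (hS : ∀ t v, Event.res t (Resp.value v) ∉ S) : lastUseLegal E H S i := by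
  refine ⟨fun _ => False, isLegal_of_noValue ?_⟩
  intro t v hmem
  rcases mem_buildLUVis hmem with h | ⟨j, h⟩ | ⟨j, h⟩
  · exact hS t v h
  · simp at h
  · simp at h

end TM

namespace TM

open Classical

lemma inTxn_cases {L : History} {i : ℕ} (hL : ∀ e ∈ L, e.txn = 1 ∨ e.txn = 2)
    (h : inTxn L i) : i = 1 ∨ i = 2 := by
  obtain ⟨e, he, ht⟩ := inTxn_txn h
  rcases hL e he with h' | h' <;> omega

lemma not_inTxn {L : History} {i : ℕ} (hL : ∀ e ∈ L, e.txn = 1 ∨ e.txn = 2)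
    (h1 : i ≠ 1) (h2 : i ≠ 2) : ¬ inTxn L i := by
  intro h
  rcases inTxn_cases hL h with rfl | rfl <;> simp at h1 h2

/-- The per-transaction condition in `isCompletion`. -/
def complCond (H C : History) (i : ℕ) : Prop :=
  ((committed H i ∨ aborted H i) → proj i C = proj i H) ∧
    (¬ committed H i → ¬ aborted H i →
      (pendingInv H i Op.tryCommit →
          proj i C = proj i H ++ [Event.res i Resp.committed]) ∧
      ((∃ o : Op, o ≠ Op.tryCommit ∧ pendingInv H i o) →
          proj i C = proj i H ++ [Event.res i Resp.aborted]) ∧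
      ((¬ ∃ o : Op, pendingInv H i o) →
          proj i C = proj i H ++ [Event.inv i Op.tryCommit, Event.res i Resp.aborted]))

lemma isCompletion_of {P C : History}
    (hpre : P <+: C)
    (hCt : ∀ e ∈ C, e.txn = 1 ∨ e.txn = 2)
    (hPt : ∀ e ∈ P, e.txn = 1 ∨ e.txn = 2)
    (h1 : inTxn C 1 → inTxn P 1) (h2 : inTxn C 2 → inTxn P 2)
    (hca1 : inTxn C 1 → committed C 1 ∨ aborted C 1)
    (hca2 : inTxn C 2 → committed C 2 ∨ aborted C 2)
    (hc1 : inTxn P 1 → complCond P C 1)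
    (hc2 : inTxn P 2 → complCond P C 2) : isCompletion P C := by
  refine ⟨hpre, ?_, ?_, ?_⟩
  · intro i hi
    rcases inTxn_cases hCt hi with rfl | rfl
    · exact h1 hi
    · exact h2 hi
  · intro i hi
    rcases inTxn_cases hCt hi with rfl | rfl
    · exact hca1 hi
    · exact hca2 hi
  · intro i hi
    rcases inTxn_cases hPt hi with rfl | rfl
    · exact hc1 hi
    · exact hc2 hi

lemma fsLU_of {E : Set History} {P C A B : History}
    (hcomp : isCompletion P C)
    (hA1 : ∀ e ∈ A, e.txn = 1) (hB2 : ∀ e ∈ B, e.txn = 2)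
    (hequiv : equivH (A ++ B) C)
    (hRT : preservesRT P (A ++ B))
    (hnc : ∀ t, Event.res t Resp.committed ∉ A ++ B)
    (hLU : ∀ i : ℕ, inTxn (A ++ B) i → ¬ committed (A ++ B) i →
        lastUseLegal E P (A ++ B) i) :
    finalStateLUOpaque E P := by
  refine ⟨C, A ++ B, hcomp, sequential_append hA1 hB2, hequiv, hRT, ?_, hLU⟩
  intro i _ hc
  exact absurd hc (not_committed fun hm => hnc i (mem_proj hm).1)

lemma fsLU_of_noValue {E : Set History} {P C A B : History}
    (hcomp : isCompletion P C)
    (hA1 : ∀ e ∈ A, e.txn = 1) (hB2 : ∀ e ∈ B, e.txn = 2)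
    (hequiv : equivH (A ++ B) C)
    (hRT : preservesRT P (A ++ B))
    (hnc : ∀ t, Event.res t Resp.committed ∉ A ++ B)
    (hnv : ∀ t v, Event.res t (Resp.value v) ∉ A ++ B) :
    finalStateLUOpaque E P :=
  fsLU_of hcomp hA1 hB2 hequiv hRT hnc
    (fun _ _ _ => lastUseLegal_of_noValue hnv)

lemma equivH_of {S C : History}
    (hS : ∀ e ∈ S, e.txn = 1 ∨ e.txn = 2)
    (hC : ∀ e ∈ C, e.txn = 1 ∨ e.txn = 2)
    (h1 : proj 1 S = proj 1 C) (h2 : proj 2 S = proj 2 C) : equivH S C := by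
  intro i
  by_cases hi1 : i = 1
  · subst hi1; exact h1
  by_cases hi2 : i = 2
  · subst hi2; exact h2
  rw [proj_eq_nil hS hi1 hi2, proj_eq_nil hC hi1 hi2]

end TM

namespace TM

open Classical

instance (L : History) (i : ℕ) : Decidable (inTxn L i) :=
  decidable_of_iff (proj i L ≠ []) Iff.rfl

instance (L : History) (i : ℕ) : Decidable (committed L i) :=
  decidable_of_iff
    (List.Sublist [Event.inv i Op.tryCommit, Event.res i Resp.committed] (proj i L)) Iff.rfl

instance (L : History) (i : ℕ) : Decidable (aborted L i) :=
  decidable_of_iff (Event.res i Resp.aborted ∈ proj i L) Iff.rfl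

instance (L : History) (i : ℕ) (o : Op) : Decidable (pendingInv L i o) :=
  decidable_of_iff ((proj i L).getLast? = some (Event.inv i o)) Iff.rfl

lemma complCond_noPending {P C : History} {i : ℕ}
    (h1 : ¬ committed P i) (h2 : ¬ aborted P i)
    (hlast : ∃ t r, (proj i P).getLast? = some (Event.res t r))
    (hC : proj i C = proj i P ++ [Event.inv i Op.tryCommit, Event.res i Resp.aborted]) :
    complCond P C i := by
  obtain ⟨t, r, hlast⟩ := hlast
  refine ⟨fun h => (h.elim h1 h2).elim, fun _ _ => ⟨?_, ?_, fun _ => hC⟩⟩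
  · intro h
    rw [pendingInv, hlast] at h
    simp at h
  · rintro ⟨o, _, ho⟩
    rw [pendingInv, hlast] at ho
    simp at ho

end TM

namespace TM

open Classical

lemma not_rtPrec_right {P : History} {i j : ℕ} (hP : ∀ e ∈ P, e.txn ≠ j) :
    ¬ rtPrec P i j := fun h =>
  let ⟨e, he, ht⟩ := rtPrec_txn_right h; hP e he ht

lemma not_rtPrec_left {P : History} {i j : ℕ} (hP : ∀ e ∈ P, e.txn ≠ i) :
    ¬ rtPrec P i j := fun h =>
  let ⟨e, he, ht⟩ := rtPrec_txn_left h; hP e he ht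

lemma complCond_pending {P C : History} {i : ℕ} {o₀ : Op}
    (h1 : ¬ committed P i) (h2 : ¬ aborted P i)
    (hne : o₀ ≠ Op.tryCommit)
    (hlast : (proj i P).getLast? = some (Event.inv i o₀))
    (hC : proj i C = proj i P ++ [Event.res i Resp.aborted]) :
    complCond P C i := by
  refine ⟨fun h => (h.elim h1 h2).elim, fun _ _ => ⟨?_, fun _ => hC, ?_⟩⟩
  · intro h
    rw [pendingInv, hlast] at h
    simp at h
    exact (hne h).elim
  · intro h
    exact absurd ⟨o₀, hlast⟩ h

/-- The example history. -/
def Hex : History :=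
  [Event.inv 1 Op.init, Event.res 1 Resp.ok, Event.inv 2 Op.init,
   Event.inv 1 (Op.write 0 1), Event.res 1 Resp.ok,
   Event.res 2 Resp.ok, Event.inv 2 (Op.read 0), Event.res 2 (Resp.value 1)]

/-- The program: all prefixes of `Hex`. -/
def Eset : Set History := {P | P <+: Hex}

lemma prefixClosed_Eset : prefixClosed Eset :=
  fun _ hH _ hP => hP.trans hH

-- test representative case n = 2
example : finalStateLUOpaque Eset [Event.inv 1 Op.init, Event.res 1 Resp.ok] := by
  apply fsLU_of_noValue
    (C := [Event.inv 1 Op.init, Event.res 1 Resp.ok, Event.inv 1 Op.tryCommit,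
      Event.res 1 Resp.aborted])
    (A := [Event.inv 1 Op.init, Event.res 1 Resp.ok, Event.inv 1 Op.tryCommit,
      Event.res 1 Resp.aborted]) (B := [])
  · apply isCompletion_of ⟨_, rfl⟩ (by decide) (by decide)
    · intro _; decide
    · intro h; exact absurd h (by decide)
    · intro _; right; decide
    · intro h; exact absurd h (by decide)
    · intro _
      exact complCond_noPending (by decide) (by decide) ⟨1, Resp.ok, by decide⟩ (by decide)
    · intro h; exact absurd h (by decide)
  · decide
  · decide
  · exact equivH_of (by decide) (by decide) (by decide) (by decide)
  · apply preservesRT_of (by decide)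
    · intro h
      exact absurd h (not_rtPrec_right (by decide))
    · intro h
      exact absurd h (not_rtPrec_left (by decide))
  · intro t; simp
  · intro t v; simp

end TM

namespace TM

open Classical

lemma case0 : finalStateLUOpaque Eset [] := by
  apply fsLU_of_noValue
    (C := [])
    (A := [])
    (B := [])
  · apply isCompletion_of ⟨_, rfl⟩ (by decide) (by decide)
    · intro h; first | decide | exact absurd h (by decide)
    · intro h; first | decide | exact absurd h (by decide)
    · intro h; first | exact Or.inr (by decide) | exact absurd h (by decide)
    · intro h; first | exact Or.inr (by decide) | exact absurd h (by decide)
    · intro h; exact absurd h (by decide)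
    · intro h; exact absurd h (by decide)
  · decide
  · decide
  · exact equivH_of (by decide) (by decide) (by decide) (by decide)
  · apply preservesRT_of (by decide)
    · intro h; exact absurd h (not_rtPrec_right (by decide))
    · intro h; exact absurd h (not_rtPrec_left (by decide))
  · intro t; simp
  · intro t v; simp

lemma case1 : finalStateLUOpaque Eset [Event.inv 1 Op.init] := by
  apply fsLU_of_noValue
    (C := [Event.inv 1 Op.init,
      Event.res 1 Resp.aborted])
    (A := [Event.inv 1 Op.init,
      Event.res 1 Resp.aborted])
    (B := [])
  · apply isCompletion_of ⟨_, rfl⟩ (by decide) (by decide)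
    · intro h; first | decide | exact absurd h (by decide)
    · intro h; first | decide | exact absurd h (by decide)
    · intro h; first | exact Or.inr (by decide) | exact absurd h (by decide)
    · intro h; first | exact Or.inr (by decide) | exact absurd h (by decide)
    · intro _; exact complCond_pending (o₀ := Op.init) (by decide) (by decide) (by decide) (by decide) (by decide)
    · intro h; exact absurd h (by decide)
  · decide
  · decide
  · exact equivH_of (by decide) (by decide) (by decide) (by decide)
  · apply preservesRT_of (by decide)
    · intro h; exact absurd h (not_rtPrec_right (by decide))
    · intro h; exact absurd h (not_rtPrec_left (by decide))
  · intro t; simp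
  · intro t v; simp

lemma case2 : finalStateLUOpaque Eset [Event.inv 1 Op.init,
      Event.res 1 Resp.ok] := by
  apply fsLU_of_noValue
    (C := [Event.inv 1 Op.init,
      Event.res 1 Resp.ok,
      Event.inv 1 Op.tryCommit,
      Event.res 1 Resp.aborted])
    (A := [Event.inv 1 Op.init,
      Event.res 1 Resp.ok,
      Event.inv 1 Op.tryCommit,
      Event.res 1 Resp.aborted])
    (B := [])
  · apply isCompletion_of ⟨_, rfl⟩ (by decide) (by decide)
    · intro h; first | decide | exact absurd h (by decide)
    · intro h; first | decide | exact absurd h (by decide)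
    · intro h; first | exact Or.inr (by decide) | exact absurd h (by decide)
    · intro h; first | exact Or.inr (by decide) | exact absurd h (by decide)
    · intro _; exact complCond_noPending (by decide) (by decide) ⟨1, Resp.ok, by decide⟩ (by decide)
    · intro h; exact absurd h (by decide)
  · decide
  · decide
  · exact equivH_of (by decide) (by decide) (by decide) (by decide)
  · apply preservesRT_of (by decide)
    · intro h; exact absurd h (not_rtPrec_right (by decide))
    · intro h; exact absurd h (not_rtPrec_left (by decide))
  · intro t; simp
  · intro t v; simp

lemma case3 : finalStateLUOpaque Eset [Event.inv 1 Op.init,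
      Event.res 1 Resp.ok,
      Event.inv 2 Op.init] := by
  apply fsLU_of_noValue
    (C := [Event.inv 1 Op.init,
      Event.res 1 Resp.ok,
      Event.inv 2 Op.init,
      Event.inv 1 Op.tryCommit,
      Event.res 1 Resp.aborted,
      Event.res 2 Resp.aborted])
    (A := [Event.inv 1 Op.init,
      Event.res 1 Resp.ok,
      Event.inv 1 Op.tryCommit,
      Event.res 1 Resp.aborted])
    (B := [Event.inv 2 Op.init,
      Event.res 2 Resp.aborted])
  · apply isCompletion_of ⟨_, rfl⟩ (by decide) (by decide)
    · intro h; first | decide | exact absurd h (by decide)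
    · intro h; first | decide | exact absurd h (by decide)
    · intro h; first | exact Or.inr (by decide) | exact absurd h (by decide)
    · intro h; first | exact Or.inr (by decide) | exact absurd h (by decide)
    · intro _; exact complCond_noPending (by decide) (by decide) ⟨1, Resp.ok, by decide⟩ (by decide)
    · intro _; exact complCond_pending (o₀ := Op.init) (by decide) (by decide) (by decide) (by decide) (by decide)
  · decide
  · decide
  · exact equivH_of (by decide) (by decide) (by decide) (by decide)
  · apply preservesRT_of (by decide)
    · intro _; exact rtPrec_append (by decide) (by decide) (by decide) (by decide)
    · intro h
      exact absurd h (not_rtPrec_of (a := 2) (b := 0)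
        (ea := Event.inv 2 Op.init) (eb := Event.inv 1 Op.init)
        (by decide) (by decide) (by decide) (by decide) (by omega))
  · intro t; simp
  · intro t v; simp

lemma case4 : finalStateLUOpaque Eset [Event.inv 1 Op.init,
      Event.res 1 Resp.ok,
      Event.inv 2 Op.init,
      Event.inv 1 (Op.write 0 1)] := by
  apply fsLU_of_noValue
    (C := [Event.inv 1 Op.init,
      Event.res 1 Resp.ok,
      Event.inv 2 Op.init,
      Event.inv 1 (Op.write 0 1),
      Event.res 1 Resp.aborted,
      Event.res 2 Resp.aborted])
    (A := [Event.inv 1 Op.init,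
      Event.res 1 Resp.ok,
      Event.inv 1 (Op.write 0 1),
      Event.res 1 Resp.aborted])
    (B := [Event.inv 2 Op.init,
      Event.res 2 Resp.aborted])
  · apply isCompletion_of ⟨_, rfl⟩ (by decide) (by decide)
    · intro h; first | decide | exact absurd h (by decide)
    · intro h; first | decide | exact absurd h (by decide)
    · intro h; first | exact Or.inr (by decide) | exact absurd h (by decide)
    · intro h; first | exact Or.inr (by decide) | exact absurd h (by decide)
    · intro _; exact complCond_pending (o₀ := Op.write 0 1) (by decide) (by decide) (by decide) (by decide) (by decide)
    · intro _; exact complCond_pending (o₀ := Op.init) (by decide) (by decide) (by decide) (by decide) (by decide)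
  · decide
  · decide
  · exact equivH_of (by decide) (by decide) (by decide) (by decide)
  · apply preservesRT_of (by decide)
    · intro h
      exact absurd h (not_rtPrec_of (a := 3) (b := 2)
        (ea := Event.inv 1 (Op.write 0 1)) (eb := Event.inv 2 Op.init)
        (by decide) (by decide) (by decide) (by decide) (by omega))
    · intro h
      exact absurd h (not_rtPrec_of (a := 2) (b := 0)
        (ea := Event.inv 2 Op.init) (eb := Event.inv 1 Op.init)
        (by decide) (by decide) (by decide) (by decide) (by omega))
  · intro t; simp
  · intro t v; simp

lemma case5 : finalStateLUOpaque Eset [Event.inv 1 Op.init,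
      Event.res 1 Resp.ok,
      Event.inv 2 Op.init,
      Event.inv 1 (Op.write 0 1),
      Event.res 1 Resp.ok] := by
  apply fsLU_of_noValue
    (C := [Event.inv 1 Op.init,
      Event.res 1 Resp.ok,
      Event.inv 2 Op.init,
      Event.inv 1 (Op.write 0 1),
      Event.res 1 Resp.ok,
      Event.inv 1 Op.tryCommit,
      Event.res 1 Resp.aborted,
      Event.res 2 Resp.aborted])
    (A := [Event.inv 1 Op.init,
      Event.res 1 Resp.ok,
      Event.inv 1 (Op.write 0 1),
      Event.res 1 Resp.ok,
      Event.inv 1 Op.tryCommit,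
      Event.res 1 Resp.aborted])
    (B := [Event.inv 2 Op.init,
      Event.res 2 Resp.aborted])
  · apply isCompletion_of ⟨_, rfl⟩ (by decide) (by decide)
    · intro h; first | decide | exact absurd h (by decide)
    · intro h; first | decide | exact absurd h (by decide)
    · intro h; first | exact Or.inr (by decide) | exact absurd h (by decide)
    · intro h; first | exact Or.inr (by decide) | exact absurd h (by decide)
    · intro _; exact complCond_noPending (by decide) (by decide) ⟨1, Resp.ok, by decide⟩ (by decide)
    · intro _; exact complCond_pending (o₀ := Op.init) (by decide) (by decide) (by decide) (by decide) (by decide)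
  · decide
  · decide
  · exact equivH_of (by decide) (by decide) (by decide) (by decide)
  · apply preservesRT_of (by decide)
    · intro h
      exact absurd h (not_rtPrec_of (a := 3) (b := 2)
        (ea := Event.inv 1 (Op.write 0 1)) (eb := Event.inv 2 Op.init)
        (by decide) (by decide) (by decide) (by decide) (by omega))
    · intro h
      exact absurd h (not_rtPrec_of (a := 2) (b := 0)
        (ea := Event.inv 2 Op.init) (eb := Event.inv 1 Op.init)
        (by decide) (by decide) (by decide) (by decide) (by omega))
  · intro t; simp
  · intro t v; simp

lemma case6 : finalStateLUOpaque Eset [Event.inv 1 Op.init,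
      Event.res 1 Resp.ok,
      Event.inv 2 Op.init,
      Event.inv 1 (Op.write 0 1),
      Event.res 1 Resp.ok,
      Event.res 2 Resp.ok] := by
  apply fsLU_of_noValue
    (C := [Event.inv 1 Op.init,
      Event.res 1 Resp.ok,
      Event.inv 2 Op.init,
      Event.inv 1 (Op.write 0 1),
      Event.res 1 Resp.ok,
      Event.res 2 Resp.ok,
      Event.inv 1 Op.tryCommit,
      Event.res 1 Resp.aborted,
      Event.inv 2 Op.tryCommit,
      Event.res 2 Resp.aborted])
    (A := [Event.inv 1 Op.init,
      Event.res 1 Resp.ok,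
      Event.inv 1 (Op.write 0 1),
      Event.res 1 Resp.ok,
      Event.inv 1 Op.tryCommit,
      Event.res 1 Resp.aborted])
    (B := [Event.inv 2 Op.init,
      Event.res 2 Resp.ok,
      Event.inv 2 Op.tryCommit,
      Event.res 2 Resp.aborted])
  · apply isCompletion_of ⟨_, rfl⟩ (by decide) (by decide)
    · intro h; first | decide | exact absurd h (by decide)
    · intro h; first | decide | exact absurd h (by decide)
    · intro h; first | exact Or.inr (by decide) | exact absurd h (by decide)
    · intro h; first | exact Or.inr (by decide) | exact absurd h (by decide)
    · intro _; exact complCond_noPending (by decide) (by decide) ⟨1, Resp.ok, by decide⟩ (by decide)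
    · intro _; exact complCond_noPending (by decide) (by decide) ⟨2, Resp.ok, by decide⟩ (by decide)
  · decide
  · decide
  · exact equivH_of (by decide) (by decide) (by decide) (by decide)
  · apply preservesRT_of (by decide)
    · intro h
      exact absurd h (not_rtPrec_of (a := 3) (b := 2)
        (ea := Event.inv 1 (Op.write 0 1)) (eb := Event.inv 2 Op.init)
        (by decide) (by decide) (by decide) (by decide) (by omega))
    · intro h
      exact absurd h (not_rtPrec_of (a := 2) (b := 0)
        (ea := Event.inv 2 Op.init) (eb := Event.inv 1 Op.init)
        (by decide) (by decide) (by decide) (by decide) (by omega))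
  · intro t; simp
  · intro t v; simp

lemma case7 : finalStateLUOpaque Eset [Event.inv 1 Op.init,
      Event.res 1 Resp.ok,
      Event.inv 2 Op.init,
      Event.inv 1 (Op.write 0 1),
      Event.res 1 Resp.ok,
      Event.res 2 Resp.ok,
      Event.inv 2 (Op.read 0)] := by
  apply fsLU_of_noValue
    (C := [Event.inv 1 Op.init,
      Event.res 1 Resp.ok,
      Event.inv 2 Op.init,
      Event.inv 1 (Op.write 0 1),
      Event.res 1 Resp.ok,
      Event.res 2 Resp.ok,
      Event.inv 2 (Op.read 0),
      Event.inv 1 Op.tryCommit,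
      Event.res 1 Resp.aborted,
      Event.res 2 Resp.aborted])
    (A := [Event.inv 1 Op.init,
      Event.res 1 Resp.ok,
      Event.inv 1 (Op.write 0 1),
      Event.res 1 Resp.ok,
      Event.inv 1 Op.tryCommit,
      Event.res 1 Resp.aborted])
    (B := [Event.inv 2 Op.init,
      Event.res 2 Resp.ok,
      Event.inv 2 (Op.read 0),
      Event.res 2 Resp.aborted])
  · apply isCompletion_of ⟨_, rfl⟩ (by decide) (by decide)
    · intro h; first | decide | exact absurd h (by decide)
    · intro h; first | decide | exact absurd h (by decide)
    · intro h; first | exact Or.inr (by decide) | exact absurd h (by decide)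
    · intro h; first | exact Or.inr (by decide) | exact absurd h (by decide)
    · intro _; exact complCond_noPending (by decide) (by decide) ⟨1, Resp.ok, by decide⟩ (by decide)
    · intro _; exact complCond_pending (o₀ := Op.read 0) (by decide) (by decide) (by decide) (by decide) (by decide)
  · decide
  · decide
  · exact equivH_of (by decide) (by decide) (by decide) (by decide)
  · apply preservesRT_of (by decide)
    · intro h
      exact absurd h (not_rtPrec_of (a := 3) (b := 2)
        (ea := Event.inv 1 (Op.write 0 1)) (eb := Event.inv 2 Op.init)
        (by decide) (by decide) (by decide) (by decide) (by omega))
    · intro h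
      exact absurd h (not_rtPrec_of (a := 2) (b := 0)
        (ea := Event.inv 2 Op.init) (eb := Event.inv 1 Op.init)
        (by decide) (by decide) (by decide) (by decide) (by omega))
  · intro t; simp
  · intro t v; simp

end TM

namespace TM

open Classical

lemma closingWrite_Hex : closingWrite Eset Hex 1 0 1 3 4 := by
  constructor
  · exact ⟨by omega, rfl, rfl, fun m e h1 h2 _ => by omega⟩
  · intro H' hH' hpre m v' hm
    obtain ⟨t, ht⟩ := hH'
    have hm8 : Hex[m]? = some (Event.inv 1 (Op.write 0 v')) := by
      rw [← ht, List.getElem?_append_left (lt_len hm)]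
      exact hm
    have hlt : m < 8 := lt_len hm8
    interval_cases m <;> first | omega | simp [Hex] at hm8

lemma decidedOn_Hex : decidedOn Eset Hex 1 0 := ⟨1, 3, 4, closingWrite_Hex⟩

/-- The serialization used for the full history. -/
def S8 : History :=
  [Event.inv 1 Op.init, Event.res 1 Resp.ok, Event.inv 1 (Op.write 0 1),
   Event.res 1 Resp.ok, Event.inv 1 Op.tryCommit, Event.res 1 Resp.aborted] ++
  [Event.inv 2 Op.init, Event.res 2 Resp.ok, Event.inv 2 (Op.read 0),
   Event.res 2 (Resp.value 1), Event.inv 2 Op.tryCommit, Event.res 2 Resp.aborted]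

lemma rtPrec_S8 : rtPrec S8 1 2 :=
  rtPrec_append (by decide) (by decide) (by decide) (by decide)

lemma not_rtPrec_S8 : ¬ rtPrec S8 2 1 :=
  not_rtPrec_of (a := 6) (b := 0) (ea := Event.inv 2 Op.init) (eb := Event.inv 1 Op.init)
    (by decide) (by decide) (by decide) (by decide) (by omega)

lemma not_rtPrec_Hex12 : ¬ rtPrec Hex 1 2 :=
  not_rtPrec_of (a := 3) (b := 2) (ea := Event.inv 1 (Op.write 0 1))
    (eb := Event.inv 2 Op.init) (by decide) (by decide) (by decide) (by decide) (by omega)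

lemma buildLUVis_1 : buildLUVis Eset Hex S8 1 (fun _ => False) = proj 1 S8 := by
  have hn1 : ¬ (2 = 1 ∨ committed S8 2 ∧ rtPrec S8 2 1) := by
    rintro (h | ⟨hc, _⟩)
    · omega
    · exact absurd hc (by decide)
  have hn2 : ¬ (¬ committed S8 2 ∧ (∃ x, decidedOn Eset Hex 2 x) ∧ rtPrec S8 2 1 ∧
      ¬ rtPrec Hex 2 1 ∧ False) := by
    rintro ⟨_, _, _, _, hfalse⟩
    exact hfalse
  unfold buildLUVis
  rw [show txnOrder S8 = [1, 2] from by decide]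
  simp only [List.flatMap_cons, List.flatMap_nil, List.append_nil]
  rw [if_neg hn2, if_neg hn1, if_pos (Or.inl trivial)]
  simp

lemma seqOfIdx_eval {L : History} {p : ℕ → Prop} (hlen : L.length = 6)
    (hp0 : p 0) (hp1 : p 1) (hp2 : p 2) (hp3 : p 3) (hp4 : ¬ p 4) (hp5 : ¬ p 5) :
    seqOfIdx L p = [0, 1, 2, 3].filterMap (fun k => L[k]?) := by
  unfold seqOfIdx
  rw [hlen, show List.range 6 = [0, 1, 2, 3, 4, 5] from rfl]
  simp only [List.filter_cons, List.filter_nil, decide_eq_true hp0, decide_eq_true hp1,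
    decide_eq_true hp2, decide_eq_true hp3, decide_eq_false hp4, decide_eq_false hp5,
    if_true, if_false]
  simp

def L1 : History :=
  [Event.inv 1 Op.init, Event.res 1 Resp.ok, Event.inv 1 (Op.write 0 1),
   Event.res 1 Resp.ok, Event.inv 1 Op.tryCommit, Event.res 1 Resp.aborted]

lemma proj1_S8 : proj 1 S8 = L1 := by decide

lemma lastUseProj_1 : lastUseProj Eset Hex S8 1 =
    [Event.inv 1 Op.init, Event.res 1 Resp.ok, Event.inv 1 (Op.write 0 1),
     Event.res 1 Resp.ok] := by
  have h0 : lastUseProj Eset Hex S8 1 = seqOfIdx (proj 1 S8)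
      (fun k => completeAt (proj 1 S8) k ∧
        (k ≤ 1 ∨ ∃ x, eventVarAt (proj 1 S8) k = some x ∧ decidedOn Eset Hex 1 x)) := rfl
  rw [h0, proj1_S8]
  rw [seqOfIdx_eval (by decide : L1.length = 6)]
  · rfl
  · exact ⟨fun t o h => ⟨1, Resp.ok, rfl⟩, Or.inl (by omega)⟩
  · exact ⟨fun t o h => by simp [L1] at h, Or.inl (by omega)⟩
  · exact ⟨fun t o h => ⟨1, Resp.ok, rfl⟩, Or.inr ⟨0, rfl, decidedOn_Hex⟩⟩
  · exact ⟨fun t o h => by simp [L1] at h, Or.inr ⟨0, rfl, decidedOn_Hex⟩⟩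
  · rintro ⟨_, h | ⟨x, hx, _⟩⟩
    · omega
    · rw [show eventVarAt L1 4 = none from rfl] at hx
      cases hx
  · rintro ⟨_, h | ⟨x, hx, _⟩⟩
    · omega
    · rw [show eventVarAt L1 5 = none from rfl] at hx
      cases hx

lemma buildLUVis_2 : buildLUVis Eset Hex S8 2 (fun _ => True) =
    lastUseProjC Eset Hex S8 1 ++ proj 2 S8 := by
  unfold buildLUVis
  rw [show txnOrder S8 = [1, 2] from by decide]
  simp only [List.flatMap_cons, List.flatMap_nil, List.append_nil]
  have hn1 : ¬ (1 = 2 ∨ committed S8 1 ∧ rtPrec S8 1 2) := by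
    rintro (h | ⟨hc, _⟩)
    · omega
    · exact absurd hc (by decide)
  have hp1 : ¬ committed S8 1 ∧ (∃ x, decidedOn Eset Hex 1 x) ∧ rtPrec S8 1 2 ∧
      ¬ rtPrec Hex 1 2 ∧ True :=
    ⟨by decide, ⟨0, decidedOn_Hex⟩, rtPrec_S8, not_rtPrec_Hex12, trivial⟩
  rw [if_neg hn1, if_pos hp1, if_pos (Or.inl trivial)]

end TM

namespace TM

open Classical

/-- The admissible `LUVis(S8, T2)`: `T1`'s decided projection (with commit)
followed by `T2`'s events. -/
def LUV : History :=
  [Event.inv 1 Op.init, Event.res 1 Resp.ok, Event.inv 1 (Op.write 0 1),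
   Event.res 1 Resp.ok, Event.inv 1 Op.tryCommit, Event.res 1 Resp.committed,
   Event.inv 2 Op.init, Event.res 2 Resp.ok, Event.inv 2 (Op.read 0),
   Event.res 2 (Resp.value 1), Event.inv 2 Op.tryCommit, Event.res 2 Resp.aborted]

lemma LUV_eq : lastUseProjC Eset Hex S8 1 ++ proj 2 S8 = LUV := by
  unfold lastUseProjC
  rw [lastUseProj_1]
  decide

lemma isLegal_LUV : isLegal LUV := by
  rintro i x v ki kr ⟨hlt, hinv, hres, hgap⟩
  have hki : ki < 12 := lt_len hinv
  interval_cases ki <;> simp [LUV] at hinv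
  obtain ⟨hi, hx⟩ := hinv
  subst hi
  have hkr : kr < 12 := lt_len hres
  have h8 : 8 < kr := hlt
  interval_cases kr <;> simp [LUV] at hres
  subst hres
  subst hx
  left
  refine ⟨1, 2, 3, by omega, ⟨by omega, rfl, rfl, fun m e a b _ => by omega⟩, ?_⟩
  rintro j' v' kwi' kwr' ⟨hlt', hinv', hres', hgap'⟩ hkr'
  have hki' : kwi' < 12 := lt_len hinv'
  interval_cases kwi' <;> simp [LUV] at hinv'
  obtain ⟨hj, hw⟩ := hinv'
  subst hj
  have hkr12 : kwr' < 12 := lt_len hres'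
  interval_cases kwr' <;> first | omega | simp [LUV] at hres'

lemma LU1 : lastUseLegal Eset Hex S8 1 := by
  refine ⟨fun _ => False, ?_⟩
  rw [buildLUVis_1, proj1_S8]
  exact isLegal_of_noValue (by intro t v; simp [L1])

lemma LU2 : lastUseLegal Eset Hex S8 2 := by
  refine ⟨fun _ => True, ?_⟩
  rw [buildLUVis_2, LUV_eq]
  exact isLegal_LUV

lemma case8 : finalStateLUOpaque Eset Hex := by
  apply fsLU_of
    (C := Hex ++ [Event.inv 1 Op.tryCommit, Event.res 1 Resp.aborted,
      Event.inv 2 Op.tryCommit, Event.res 2 Resp.aborted])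
    (A := [Event.inv 1 Op.init, Event.res 1 Resp.ok, Event.inv 1 (Op.write 0 1),
      Event.res 1 Resp.ok, Event.inv 1 Op.tryCommit, Event.res 1 Resp.aborted])
    (B := [Event.inv 2 Op.init, Event.res 2 Resp.ok, Event.inv 2 (Op.read 0),
      Event.res 2 (Resp.value 1), Event.inv 2 Op.tryCommit, Event.res 2 Resp.aborted])
  · apply isCompletion_of ⟨_, rfl⟩ (by decide) (by decide)
    · intro _; decide
    · intro _; decide
    · intro _; exact Or.inr (by decide)
    · intro _; exact Or.inr (by decide)
    · intro _
      exact complCond_noPending (by decide) (by decide) ⟨1, Resp.ok, by decide⟩ (by decide)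
    · intro _
      exact complCond_noPending (by decide) (by decide) ⟨2, Resp.value 1, by decide⟩ (by decide)
  · decide
  · decide
  · exact equivH_of (by decide) (by decide) (by decide) (by decide)
  · apply preservesRT_of (by decide)
    · intro h; exact absurd h not_rtPrec_Hex12
    · intro h
      exact absurd h (not_rtPrec_of (a := 2) (b := 0)
        (ea := Event.inv 2 Op.init) (eb := Event.inv 1 Op.init)
        (by decide) (by decide) (by decide) (by decide) (by omega))
  · intro t; simp
  · intro i hi _
    rcases inTxn_cases (by decide) hi with rfl | rfl
    · exact LU1
    · exact LU2

end TM

namespace TM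

open Classical

lemma wellFormedTxn_nil (i : ℕ) : wellFormedTxn [] i := by
  refine ⟨?_, ?_, ?_, ?_⟩
  · intro k e h; simp at h
  · intro h; simp at h
  · intro k h; rcases h with h | h <;> simp at h
  · intro k o h; simp at h

lemma wf_Hex : wellFormed Hex := by
  intro i
  by_cases h1 : i = 1
  · subst h1
    rw [show proj 1 Hex = [Event.inv 1 Op.init, Event.res 1 Resp.ok,
      Event.inv 1 (Op.write 0 1), Event.res 1 Resp.ok] from by decide]
    refine ⟨?_, fun _ => rfl, ?_, ?_⟩
    · intro k e h
      have hk : k < 4 := by simpa using lt_len h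
      interval_cases k <;>
        · simp only [List.getElem?_cons_zero, List.getElem?_cons_succ,
            Option.some.injEq] at h
          subst h
          refine ⟨fun hp => ?_, fun hp => ?_⟩ <;>
            first | exact trivial | exact absurd hp (by omega)
    · intro k h
      rcases h with h | h <;>
        · have hk : k < 4 := by simpa using lt_len h
          interval_cases k <;> simp at h
    · intro k o h ho
      have hk : k < 4 := by simpa using lt_len h
      interval_cases k <;>
        first
          | (simp only [List.getElem?_cons_zero, List.getElem?_cons_succ, Option.some.injEq,
               Event.inv.injEq, true_and] at h
             subst h
             simp at ho)
          | simp at h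
  by_cases h2 : i = 2
  · subst h2
    rw [show proj 2 Hex = [Event.inv 2 Op.init, Event.res 2 Resp.ok,
      Event.inv 2 (Op.read 0), Event.res 2 (Resp.value 1)] from by decide]
    refine ⟨?_, fun _ => rfl, ?_, ?_⟩
    · intro k e h
      have hk : k < 4 := by simpa using lt_len h
      interval_cases k <;>
        · simp only [List.getElem?_cons_zero, List.getElem?_cons_succ,
            Option.some.injEq] at h
          subst h
          refine ⟨fun hp => ?_, fun hp => ?_⟩ <;>
            first | exact trivial | exact absurd hp (by omega)
    · intro k h
      rcases h with h | h <;>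
        · have hk : k < 4 := by simpa using lt_len h
          interval_cases k <;> simp at h
    · intro k o h ho
      have hk : k < 4 := by simpa using lt_len h
      interval_cases k <;>
        first
          | (simp only [List.getElem?_cons_zero, List.getElem?_cons_succ, Option.some.injEq,
               Event.inv.injEq, true_and] at h
             subst h
             simp at ho)
          | simp at h
  · rw [proj_eq_nil (by decide) h1 h2]
    exact wellFormedTxn_nil i

lemma uw_Hex : uniqueWrites Hex := by
  intro k1 k2 i1 i2 x1 x2 v1 v2 h1 h2
  have hl1 : k1 < 8 := by simpa [Hex] using lt_len h1
  have hl2 : k2 < 8 := by simpa [Hex] using lt_len h2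
  have e1 : k1 = 3 ∧ v1 = 1 := by
    interval_cases k1 <;>
      first
        | (refine ⟨rfl, ?_⟩; simp [Hex] at h1; omega)
        | simp [Hex] at h1
  have e2 : k2 = 3 ∧ v2 = 1 := by
    interval_cases k2 <;>
      first
        | (refine ⟨rfl, ?_⟩; simp [Hex] at h2; omega)
        | simp [Hex] at h2
  omega

lemma luo_Hex : lastUseOpaque Eset Hex := by
  intro P hP
  obtain ⟨n, hn8, hPn⟩ : ∃ n, n ≤ 8 ∧ P = Hex.take n :=
    ⟨P.length, by simpa [Hex] using hP.length_le, List.prefix_iff_eq_take.mp hP⟩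
  subst hPn
  interval_cases n
  · exact case0
  · exact case1
  · exact case2
  · exact case3
  · exact case4
  · exact case5
  · exact case6
  · exact case7
  · exact case8

lemma not_ACA_Hex : ¬ ACA Hex := by
  intro h
  obtain ⟨m, hm, hres⟩ := h 1 2 0 1 3 4 6 7 (by omega)
    ⟨by omega, rfl, rfl, fun m e a b _ => by omega⟩
    ⟨by omega, rfl, rfl, fun m e a b _ => by omega⟩
  interval_cases m <;> simp [Hex] at hres

end TM
namespace TM

/-- There exists a prefix-closed set `E` of histories and a
(well-formed, unique-writes) history `H ∈ E` that is last-use opaque w.r.t.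
`E` but does not avoid cascading aborts. -/
theorem lastUse_opaque_not_ACA :
    ∃ (E : Set History) (H : History),
      prefixClosed E ∧ H ∈ E ∧ wellFormed H ∧ uniqueWrites H ∧
      lastUseOpaque E H ∧ ¬ ACA H := by
  exact ⟨Eset, Hex, prefixClosed_Eset, List.prefix_refl _, wf_Hex, uw_Hex, luo_Hex,
    not_ACA_Hex⟩

end TM
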